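/- arXiv:1504.00624 — 2 statements merged into one kernel-verified Lean document; each statement's English description precedes it below -/
import Mathlib

section
/- Let X be a finite set of random variables on a finite probability space with strictly positive joint distribution P, let G be a graph on X, and suppose P is a Markov Network with respect to G (i.e., for every variable X_i, P(X_i | all other variables) = P(X_i | X_{N(i)}), where N(i) denotes the neighbors of i in G). Then for any partition X = (X1, X2), P is a Partitioned Markov Network with respect to G, i.e., for every X_i in X1, P(X_i | X1 ∪ X_{N(i)} \ X_i) = P(X_i | all other variables), and symmetrically for every X_i in X2. -/
open Finset

variable {ι V : Type*}

/-- The (unnormalized) probability that the variables in `A` take the values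
prescribed by `x`, i.e. the marginal probability `P(X_A = x_A)`. -/
noncomputable def margin [Fintype ι] [Fintype V] [DecidableEq ι] [DecidableEq V]
    (P : (ι → V) → ℝ) (A : Finset ι) (x : ι → V) : ℝ :=
  ∑ y ∈ Finset.univ.filter (fun y : ι → V => ∀ i ∈ A, y i = x i), P y

section
variable [Fintype ι] [Fintype V] [DecidableEq ι] [DecidableEq V]

lemma margin_pos (P : (ι → V) → ℝ) (hpos : ∀ x, 0 < P x) (A : Finset ι) (x : ι → V) :
    0 < margin P A x := by
  apply Finset.sum_pos (fun y _ => hpos y)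
  exact ⟨x, by simp⟩

lemma margin_congr (P : (ι → V) → ℝ) (A : Finset ι) {x y : ι → V}
    (h : ∀ j ∈ A, y j = x j) : margin P A y = margin P A x := by
  unfold margin
  congr 1
  apply Finset.filter_congr
  intro z _
  constructor <;> intro hz j hj
  · rw [hz j hj, h j hj]
  · rw [hz j hj, h j hj]

lemma margin_erase_sum (P : (ι → V) → ℝ) (x : ι → V) (i : ι) (S : Finset ι) (hiS : i ∉ S) :
    ∑ y ∈ univ.filter (fun y : ι → V => ∀ j ∈ insert i S, y j = x j),
      margin P (univ.erase i) y = margin P S x := by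
  set sS := univ.filter (fun y : ι → V => ∀ j ∈ S, y j = x j) with hsS
  set sI := univ.filter (fun y : ι → V => ∀ j ∈ insert i S, y j = x j) with hsI
  have hmap : ∀ z ∈ sS, Function.update z i (x i) ∈ sI := by
    intro z hz
    simp only [hsS, hsI, mem_filter, mem_univ, true_and] at hz ⊢
    intro j hj
    rcases Finset.mem_insert.mp hj with rfl | hj
    · rw [Function.update_self]
    · have hji : j ≠ i := fun h => hiS (h ▸ hj)
      rw [Function.update_of_ne hji, hz j hj]
  have h := Finset.sum_fiberwise_of_maps_to hmap P
  calc ∑ y ∈ sI, margin P (univ.erase i) y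
      = ∑ y ∈ sI, ∑ z ∈ sS.filter (fun z => Function.update z i (x i) = y), P z := by
        apply Finset.sum_congr rfl
        intro y hy
        simp only [hsI, mem_filter, mem_univ, true_and] at hy
        rw [margin]
        congr 1
        ext z
        simp only [hsS, mem_filter, mem_univ, true_and, mem_erase, and_true]
        constructor
        · intro hz
          constructor
          · intro j hj
            have hji : j ≠ i := fun h => hiS (h ▸ hj)
            rw [hz j hji, hy j (mem_insert_of_mem hj)]
          · funext j
            by_cases hji : j = i
            · subst hji
              rw [Function.update_self, hy j (mem_insert_self _ _)]
            · rw [Function.update_of_ne hji, hz j hji]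
        · intro hz j hj
          rw [← hz.2, Function.update_of_ne hj]
    _ = ∑ z ∈ sS, P z := h
    _ = margin P S x := rfl

lemma key_superset (P : (ι → V) → ℝ) (hpos : ∀ x, 0 < P x)
    (G : SimpleGraph ι) [DecidableRel G.Adj]
    (hMN : ∀ i : ι, ∀ x : ι → V,
      margin P (insert i (G.neighborFinset i)) x / margin P (G.neighborFinset i) x
        = P x / margin P (Finset.univ.erase i) x)
    (i : ι) (S : Finset ι) (hNS : G.neighborFinset i ⊆ S) (hiS : i ∉ S) (x : ι → V) :
    margin P (insert i S) x / margin P S x = P x / margin P (Finset.univ.erase i) x := by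
  set N := G.neighborFinset i with hN
  -- multiplicative form of hMN
  have hmul : ∀ y : ι → V,
      P y * margin P N y = margin P (insert i N) y * margin P (univ.erase i) y := by
    intro y
    have h := hMN i y
    rw [div_eq_div_iff (margin_pos P hpos _ _).ne' (margin_pos P hpos _ _).ne'] at h
    linarith [h]
  have hstep : margin P (insert i S) x * margin P N x
      = margin P (insert i N) x * margin P S x := by
    have h1 : margin P (insert i S) x * margin P N x
        = ∑ y ∈ univ.filter (fun y : ι → V => ∀ j ∈ insert i S, y j = x j),
            P y * margin P N y := by
      rw [margin, Finset.sum_mul]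
      apply Finset.sum_congr rfl
      intro y hy
      simp only [mem_filter, mem_univ, true_and] at hy
      rw [margin_congr P N (fun j hj => hy j (mem_insert_of_mem (hNS hj)))]
    rw [h1]
    have h2 : ∀ y ∈ univ.filter (fun y : ι → V => ∀ j ∈ insert i S, y j = x j),
        P y * margin P N y = margin P (insert i N) x * margin P (univ.erase i) y := by
      intro y hy
      simp only [mem_filter, mem_univ, true_and] at hy
      rw [hmul y]
      congr 1
      apply margin_congr
      intro j hj
      rcases Finset.mem_insert.mp hj with rfl | hj
      · exact hy j (mem_insert_self _ _)
      · exact hy j (mem_insert_of_mem (hNS hj))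
    rw [Finset.sum_congr rfl h2, ← Finset.mul_sum, margin_erase_sum P x i S hiS]
  have hx := hmul x
  have pN := margin_pos P hpos N x
  have pS := margin_pos P hpos S x
  have pE := margin_pos P hpos (univ.erase i) x
  rw [div_eq_div_iff pS.ne' pE.ne']
  refine mul_left_cancel₀ pN.ne' ?_
  calc margin P N x * (margin P (insert i S) x * margin P (univ.erase i) x)
      = (margin P (insert i S) x * margin P N x) * margin P (univ.erase i) x := by ring
    _ = (margin P (insert i N) x * margin P S x) * margin P (univ.erase i) x := by rw [hstep]
    _ = (margin P (insert i N) x * margin P (univ.erase i) x) * margin P S x := by ring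
    _ = (P x * margin P N x) * margin P S x := by rw [← hx]
    _ = margin P N x * (P x * margin P S x) := by ring
end

/-- `P` is a Markov network w.r.t. `G`: for every variable `i` and configuration `x`,
`P(X_i = x i | X_{N(i)} = x_{N(i)}) = P(X_i = x i | X_{\ i} = x_{\ i})`. -/
noncomputable def IsMN [Fintype ι] [Fintype V] [DecidableEq ι] [DecidableEq V]
    (P : (ι → V) → ℝ) (G : SimpleGraph ι) [DecidableRel G.Adj] : Prop :=
  ∀ i : ι, ∀ x : ι → V,
    margin P (insert i (G.neighborFinset i)) x / margin P (G.neighborFinset i) x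
      = P x / margin P (Finset.univ.erase i) x

/-- `P` is a partitioned Markov network w.r.t. `G` for the partition `(X1, X1ᶜ)`. -/
noncomputable def IsPMN [Fintype ι] [Fintype V] [DecidableEq ι] [DecidableEq V]
    (P : (ι → V) → ℝ) (G : SimpleGraph ι) [DecidableRel G.Adj] (X1 : Finset ι) : Prop :=
  (∀ i ∈ X1, ∀ x : ι → V,
      margin P (insert i ((X1 ∪ G.neighborFinset i).erase i)) x
          / margin P ((X1 ∪ G.neighborFinset i).erase i) x
        = P x / margin P (Finset.univ.erase i) x) ∧
  (∀ i ∈ X1ᶜ, ∀ x : ι → V,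
      margin P (insert i ((X1ᶜ ∪ G.neighborFinset i).erase i)) x
          / margin P ((X1ᶜ ∪ G.neighborFinset i).erase i) x
        = P x / margin P (Finset.univ.erase i) x)

/-- If a strictly positive joint distribution `P` is a Markov network w.r.t. `G`,
then for any partition `(X1, X1ᶜ)` into two nonempty groups, `P` is a partitioned
Markov network w.r.t. `G`. -/
theorem mn_is_pmn [Fintype ι] [Fintype V] [DecidableEq ι] [DecidableEq V]
    (P : (ι → V) → ℝ) (hpos : ∀ x, 0 < P x) (hsum : ∑ x : ι → V, P x = 1)
    (G : SimpleGraph ι) [DecidableRel G.Adj]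
    (hMN : IsMN P G)
    (X1 : Finset ι) (h1 : X1.Nonempty) (h2 : X1ᶜ.Nonempty) :
    IsPMN P G X1 := by
  have hN : ∀ i : ι, i ∉ G.neighborFinset i := fun i => by
    simp [SimpleGraph.irrefl]
  constructor
  · intro i _ x
    exact key_superset P hpos G hMN i _
      (fun j hj => Finset.mem_erase.mpr ⟨fun h => hN i (by rwa [h] at hj), Finset.mem_union_right _ hj⟩)
      (Finset.notMem_erase i _) x
  · intro i _ x
    exact key_superset P hpos G hMN i _
      (fun j hj => Finset.mem_erase.mpr ⟨fun h => hN i (by rwa [h] at hj), Finset.mem_union_right _ hj⟩)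
      (Finset.notMem_erase i _) x
end

section
/- Let P be a strictly positive joint distribution over finite-valued random variables X = (X1, X2), and suppose P is a PMN with respect to a graph G. Then for every X_u ∈ X1, X_u is conditionally independent of the set (X2 \ X_{N(u)}) given X1 ∪ X_{N(u)} \ X_u, i.e., X_u ⫫ (X_{\N(u)} ∩ X2) | (X1 ∪ X_{N(u)}) \ X_u. -/
open Finset

variable {ι V : Type*}

/-- If a strictly positive `P` is a PMN w.r.t. `G` then for every `u ∈ X1`, the
variable `X_u` is conditionally independent of the set `X2 \ X_{N(u)}` given
`(X1 ∪ X_{N(u)}) \ X_u`. -/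
theorem pmn_local_condIndep [Fintype ι] [Fintype V] [DecidableEq ι] [DecidableEq V]
    (P : (ι → V) → ℝ) (hpos : ∀ x, 0 < P x) (hsum : ∑ x : ι → V, P x = 1)
    (G : SimpleGraph ι) [DecidableRel G.Adj]
    (X1 : Finset ι) (hPMN : IsPMN P G X1)
    (u : ι) (hu : u ∈ X1) :
    ∀ x : ι → V,
      margin P (((X1 ∪ G.neighborFinset u).erase u ∪ {u}) ∪ (X1ᶜ \ G.neighborFinset u)) x
          / margin P ((X1 ∪ G.neighborFinset u).erase u) x
        = (margin P (insert u ((X1 ∪ G.neighborFinset u).erase u)) x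
              / margin P ((X1 ∪ G.neighborFinset u).erase u) x)
          * (margin P ((X1 ∪ G.neighborFinset u).erase u ∪ (X1ᶜ \ G.neighborFinset u)) x
              / margin P ((X1 ∪ G.neighborFinset u).erase u) x) := by
  intro x
  classical
  have hmpos : ∀ A : Finset ι, 0 < margin P A x := by
    intro A
    refine Finset.sum_pos (fun y _ => hpos y) ⟨x, ?_⟩
    simp
  have hms : ∀ A : Finset ι, margin P A x ≠ 0 := fun A => (hmpos A).ne'
  have hset1 : ((X1 ∪ G.neighborFinset u).erase u ∪ {u}) ∪ (X1ᶜ \ G.neighborFinset u)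
      = (Finset.univ : Finset ι) := by
    ext i
    simp only [Finset.mem_union, Finset.mem_erase, Finset.mem_singleton, Finset.mem_sdiff,
      Finset.mem_compl, Finset.mem_univ, iff_true]
    by_cases h : i = u
    · tauto
    · by_cases h1 : i ∈ X1 <;> by_cases h2 : i ∈ G.neighborFinset u <;> tauto
  have hset2 : (X1 ∪ G.neighborFinset u).erase u ∪ (X1ᶜ \ G.neighborFinset u)
      = Finset.univ.erase u := by
    ext i
    simp only [Finset.mem_union, Finset.mem_erase, Finset.mem_sdiff, Finset.mem_compl,
      Finset.mem_univ, and_true]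
    constructor
    · rintro (⟨h, _⟩ | ⟨h1, h2⟩)
      · exact h
      · rintro rfl; exact h1 hu
    · intro h
      by_cases h1 : i ∈ X1 <;> by_cases h2 : i ∈ G.neighborFinset u <;> tauto
  have huniv : margin P Finset.univ x = P x := by
    unfold margin
    rw [show (Finset.univ.filter (fun y : ι → V => ∀ i ∈ (Finset.univ : Finset ι), y i = x i))
        = {x} by
      ext y
      simp [funext_iff]]
    simp
  have h := hPMN.1 u hu x
  rw [hset1, huniv, hset2, h]
  field_simp
  rw [mul_div_mul_right _ _ (hms _)]
end
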